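/- arXiv:1212.3815 — 2 statements merged into one kernel-verified Lean document; each statement's English description precedes it below -/
import Mathlib

section
/- Let Γ be a finite simple connected graph with Perron vector ν and C ⊆ V nonempty with C-local eigenvalues μ₀ = λ₀ > μ₁ > … > μ_{d_C}. Define the C-local Hoffman polynomial H_C = (‖ν‖²/(π₀(C)·‖ρC‖²))·∏_{l=1}^{d_C}(x − μ_l), where π₀(C) = ∏_{l=1}^{d_C}(μ₀ − μ_l). Then H_C(A)·ρC = ν. -/
open Finset Polynomial BigOperators
open scoped Classical

noncomputable section

/-- The eigenspace of a real matrix `A` (viewed as an operator on Euclidean space)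
for the value `μ`. -/
def eigSp {n : ℕ} (A : Matrix (Fin n) (Fin n) ℝ) (μ : ℝ) :
    Submodule ℝ (EuclideanSpace ℝ (Fin n)) :=
  Module.End.eigenspace (Matrix.toEuclideanLin A) μ

/-- Orthogonal projection onto the `μ`-eigenspace of `A`. -/
def eigProj {n : ℕ} (A : Matrix (Fin n) (Fin n) ℝ) (μ : ℝ) (v : EuclideanSpace ℝ (Fin n)) :
    EuclideanSpace ℝ (Fin n) :=
  ((eigSp A μ).orthogonalProjection v : EuclideanSpace ℝ (Fin n))

/-- The weighted characteristic vector `ρS = Σ_{i∈S} ν_i e_i`. -/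
def rho {n : ℕ} (ν : EuclideanSpace ℝ (Fin n)) (S : Finset (Fin n)) :
    EuclideanSpace ℝ (Fin n) :=
  WithLp.toLp 2 (fun i => if i ∈ S then ν i else 0)

/-- The unit vector `e_S = ρS / ‖ρS‖`. -/
def unitVec {n : ℕ} (ν : EuclideanSpace ℝ (Fin n)) (S : Finset (Fin n)) :
    EuclideanSpace ℝ (Fin n) :=
  (‖rho ν S‖)⁻¹ • rho ν S

/-- The `S`-local multiplicity of `μ`: `m_S(μ) = ‖E_μ e_S‖²`. -/
def mloc {n : ℕ} (A : Matrix (Fin n) (Fin n) ℝ) (ν : EuclideanSpace ℝ (Fin n))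
    (S : Finset (Fin n)) (μ : ℝ) : ℝ :=
  ‖eigProj A μ (unitVec ν S)‖ ^ 2

/-- The `S`-local spectrum: the set of `μ` whose eigenspace sees `ρS`. -/
def evloc {n : ℕ} (A : Matrix (Fin n) (Fin n) ℝ) (ν : EuclideanSpace ℝ (Fin n))
    (S : Finset (Fin n)) : Set ℝ :=
  {μ | eigProj A μ (rho ν S) ≠ 0}

/-- Distance from a vertex `i` to a set of vertices `S`. -/
def dSet {n : ℕ} (G : SimpleGraph (Fin n)) (S : Finset (Fin n)) (i : Fin n) : ℕ :=
  sInf {k | ∃ j ∈ S, G.dist i j = k}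

/-- Eccentricity (covering radius) of a vertex set `S`. -/
def eccS {n : ℕ} (G : SimpleGraph (Fin n)) (S : Finset (Fin n)) : ℕ :=
  Finset.univ.sup (dSet G S)

/-- The `k`-th subconstituent `S_k = {i : dist(i,S) = k}`. -/
def subcons {n : ℕ} (G : SimpleGraph (Fin n)) (S : Finset (Fin n)) (k : ℕ) :
    Finset (Fin n) :=
  Finset.univ.filter (fun i => dSet G S i = k)

/-- `p(A)·v` for a polynomial `p`, a matrix `A` and a Euclidean vector `v`. -/
def aevalVec {n : ℕ} (A : Matrix (Fin n) (Fin n) ℝ) (p : Polynomial ℝ)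
    (v : EuclideanSpace ℝ (Fin n)) : EuclideanSpace ℝ (Fin n) :=
  WithLp.toLp 2 ((Polynomial.aeval A p).mulVec v)

/-- Moment-like parameter `π_l = ∏_{h≠l} |μ_l − μ_h|` for an enumeration `μ`. -/
def piC {d : ℕ} (μ : Fin (d + 1) → ℝ) (l : Fin (d + 1)) : ℝ :=
  ∏ h ∈ Finset.univ.erase l, |μ l - μ h|


section LocalHoffmanHelpers

open scoped RealInnerProductSpace

variable {n : ℕ}

lemma teL_apply (M : Matrix (Fin n) (Fin n) ℝ) (v : EuclideanSpace ℝ (Fin n)) :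
    Matrix.toEuclideanLin M v = WithLp.toLp 2 (M.mulVec v) := rfl

lemma teL_pow (A : Matrix (Fin n) (Fin n) ℝ) (k : ℕ) :
    Matrix.toEuclideanLin (A ^ k) = (Matrix.toEuclideanLin A) ^ k := by
  induction k with
  | zero =>
    apply LinearMap.ext; intro v
    simp [teL_apply, Matrix.mulVec_one]
  | succ k ih =>
    apply LinearMap.ext; intro v
    rw [pow_succ, pow_succ, Module.End.mul_apply, ← ih, teL_apply, teL_apply, teL_apply,
      Matrix.mulVec_mulVec]

lemma teL_aeval (A : Matrix (Fin n) (Fin n) ℝ) (p : Polynomial ℝ) :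
    Matrix.toEuclideanLin (aeval A p) = aeval (Matrix.toEuclideanLin A) p := by
  induction p using Polynomial.induction_on' with
  | add p q hp hq => rw [map_add, map_add, hp, hq, map_add]
  | monomial k a =>
    rw [aeval_monomial, aeval_monomial, ← Algebra.smul_def, ← Algebra.smul_def,
      map_smul, teL_pow]

lemma mem_eigSp {A : Matrix (Fin n) (Fin n) ℝ} {μ : ℝ} {w : EuclideanSpace ℝ (Fin n)} :
    w ∈ eigSp A μ ↔ A.mulVec w = μ • w := by
  rw [eigSp, Module.End.mem_eigenspace_iff, ← (WithLp.ofLp_injective 2).eq_iff]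
  exact Iff.rfl

lemma aevalVec_eq (A : Matrix (Fin n) (Fin n) ℝ) (p : Polynomial ℝ)
    (v : EuclideanSpace ℝ (Fin n)) :
    aevalVec A p v = aeval (Matrix.toEuclideanLin A) p v := by
  rw [aevalVec, ← teL_aeval]; rfl

section SymmHelpers

variable {E : Type*} [NormedAddCommGroup E] [InnerProductSpace ℝ E] {T : E →ₗ[ℝ] E}

lemma isSymm_pow (hT : T.IsSymmetric) (k : ℕ) : (T ^ k).IsSymmetric := by
  induction k with
  | zero => intro x y; simp
  | succ k ih =>
    intro x y
    calc ⟪(T ^ (k + 1)) x, y⟫ = ⟪(T ^ k) (T x), y⟫ := by rw [pow_succ]; rfl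
    _ = ⟪T x, (T ^ k) y⟫ := ih _ _
    _ = ⟪x, T ((T ^ k) y)⟫ := hT _ _
    _ = ⟪x, (T ^ (k + 1)) y⟫ := by rw [pow_succ']; rfl

lemma isSymm_aeval (hT : T.IsSymmetric) (p : Polynomial ℝ) :
    (aeval T p).IsSymmetric := by
  induction p using Polynomial.induction_on' with
  | add p q hp hq => rw [map_add]; exact hp.add hq
  | monomial k a =>
    intro x y
    rw [aeval_monomial]
    simp only [Module.End.mul_apply, Module.algebraMap_end_apply]
    rw [real_inner_smul_left, real_inner_smul_right, isSymm_pow hT k x y]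

lemma aeval_eigen {μ : ℝ} {w : E} (hw : T w = μ • w) (p : Polynomial ℝ) :
    aeval T p w = p.eval μ • w := by
  have hpow : ∀ m : ℕ, (T ^ m) w = μ ^ m • w := by
    intro m
    induction m with
    | zero => simp
    | succ m ih =>
      rw [pow_succ', Module.End.mul_apply, ih, map_smul, hw, smul_smul, ← pow_succ]
  induction p using Polynomial.induction_on' with
  | add p q hp hq => rw [map_add, LinearMap.add_apply, hp, hq, eval_add, add_smul]
  | monomial k a =>
    rw [aeval_monomial, eval_monomial]
    simp only [Module.End.mul_apply, Module.algebraMap_end_apply, hpow, smul_smul]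

end SymmHelpers

lemma inner_rho (ν : EuclideanSpace ℝ (Fin n)) (C : Finset (Fin n)) :
    ⟪rho ν C, ν⟫ = ‖rho ν C‖ ^ 2 := by
  rw [← real_inner_self_eq_norm_sq]
  simp only [PiLp.inner_apply, RCLike.inner_apply, conj_trivial]
  apply Finset.sum_congr rfl
  intro i _
  by_cases h : i ∈ C <;> simp [rho, h]

lemma rho_inner_pos (ν : EuclideanSpace ℝ (Fin n)) (hν : ∀ i, 0 < ν i)
    {C : Finset (Fin n)} (hC : C.Nonempty) : 0 < ⟪rho ν C, ν⟫ := by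
  simp only [PiLp.inner_apply, RCLike.inner_apply, conj_trivial]
  obtain ⟨i0, hi0⟩ := hC
  apply Finset.sum_pos'
  · intro i _
    by_cases h : i ∈ C <;> simp [rho, h]
    exact mul_nonneg (hν i).le (hν i).le
  · refine ⟨i0, Finset.mem_univ _, ?_⟩
    simp only [rho, hi0, if_true]
    exact mul_pos (hν i0) (hν i0)

lemma adj_entry_nonneg (G : SimpleGraph (Fin n)) [DecidableRel G.Adj] (i j : Fin n) :
    (0 : ℝ) ≤ G.adjMatrix ℝ i j := by
  rw [SimpleGraph.adjMatrix_apply]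
  split <;> norm_num

lemma perron_max (G : SimpleGraph (Fin n)) [DecidableRel G.Adj]
    {ν : Fin n → ℝ} (hν : ∀ i, 0 < ν i) {lam0 : ℝ}
    (hP : (G.adjMatrix ℝ).mulVec ν = lam0 • ν)
    {lam : ℝ} {w : Fin n → ℝ} (hw : w ≠ 0)
    (h : (G.adjMatrix ℝ).mulVec w = lam • w) : lam ≤ lam0 := by
  obtain ⟨j0, hj0⟩ : ∃ j, w j ≠ 0 := by
    by_contra hc; push_neg at hc; exact hw (funext hc)
  obtain ⟨i0, -, hmax⟩ := Finset.exists_max_image Finset.univ (fun i => |w i| / ν i)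
    ⟨j0, Finset.mem_univ _⟩
  set t := |w i0| / ν i0 with ht
  have htpos : 0 < t :=
    lt_of_lt_of_le (div_pos (abs_pos.mpr hj0) (hν j0)) (hmax j0 (Finset.mem_univ _))
  have hbound : ∀ j, |w j| ≤ t * ν j := by
    intro j
    have h1 := hmax j (Finset.mem_univ _)
    rw [div_le_iff₀ (hν j)] at h1
    linarith [h1]
  have hwi0 : |w i0| = t * ν i0 := by
    rw [ht, div_mul_cancel₀ _ (hν i0).ne']
  have key : |lam| * |w i0| ≤ t * (lam0 * ν i0) := by
    calc |lam| * |w i0| = |lam * w i0| := (abs_mul _ _).symm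
    _ = |((G.adjMatrix ℝ).mulVec w) i0| := by rw [h]; rfl
    _ = |∑ j, G.adjMatrix ℝ i0 j * w j| := by rw [Matrix.mulVec, dotProduct]
    _ ≤ ∑ j, |G.adjMatrix ℝ i0 j * w j| := Finset.abs_sum_le_sum_abs _ _
    _ = ∑ j, G.adjMatrix ℝ i0 j * |w j| := by
        apply Finset.sum_congr rfl; intro j _
        rw [abs_mul, abs_of_nonneg (adj_entry_nonneg G i0 j)]
    _ ≤ ∑ j, G.adjMatrix ℝ i0 j * (t * ν j) := by
        apply Finset.sum_le_sum; intro j _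
        exact mul_le_mul_of_nonneg_left (hbound j) (adj_entry_nonneg G i0 j)
    _ = t * ∑ j, G.adjMatrix ℝ i0 j * ν j := by
        rw [Finset.mul_sum]; apply Finset.sum_congr rfl; intro j _; ring
    _ = t * (((G.adjMatrix ℝ).mulVec ν) i0) := by rw [Matrix.mulVec, dotProduct]
    _ = t * (lam0 * ν i0) := by rw [hP]; rfl
  rw [hwi0] at key
  have hpos : 0 < t * ν i0 := mul_pos htpos (hν i0)
  have habs : |lam| ≤ lam0 := by nlinarith [key, hpos]
  exact le_trans (le_abs_self lam) habs

lemma perron_simple (hn : 0 < n) (G : SimpleGraph (Fin n)) [DecidableRel G.Adj]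
    (hconn : G.Connected) {ν : Fin n → ℝ} (hν : ∀ i, 0 < ν i) {lam0 : ℝ}
    (hP : (G.adjMatrix ℝ).mulVec ν = lam0 • ν)
    {w : Fin n → ℝ} (h : (G.adjMatrix ℝ).mulVec w = lam0 • w) :
    ∃ t : ℝ, w = t • ν := by
  obtain ⟨i0, -, hmin⟩ := Finset.exists_min_image Finset.univ (fun i => w i / ν i)
    ⟨⟨0, hn⟩, Finset.mem_univ _⟩
  set t := w i0 / ν i0 with ht
  set u : Fin n → ℝ := w - t • ν with hu
  refine ⟨t, ?_⟩
  have hueig : (G.adjMatrix ℝ).mulVec u = lam0 • u := by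
    rw [hu, Matrix.mulVec_sub, h]
    funext i
    simp only [Matrix.mulVec_smul, hP, Pi.sub_apply, Pi.smul_apply, smul_eq_mul]
    ring
  have hunn : ∀ j, 0 ≤ u j := by
    intro j
    have h1 := hmin j (Finset.mem_univ _)
    rw [le_div_iff₀ (hν j)] at h1
    simp only [hu, Pi.sub_apply, Pi.smul_apply, smul_eq_mul]
    linarith
  have hui0 : u i0 = 0 := by
    simp only [hu, Pi.sub_apply, Pi.smul_apply, smul_eq_mul, ht]
    rw [div_mul_cancel₀ _ (hν i0).ne']
    ring
  have hstep : ∀ i, u i = 0 → ∀ j, G.Adj i j → u j = 0 := by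
    intro i hi j hij
    have h0 : ∑ k, G.adjMatrix ℝ i k * u k = 0 := by
      have h2 : ((G.adjMatrix ℝ).mulVec u) i = 0 := by
        rw [hueig]; simp [hi]
      rw [Matrix.mulVec, dotProduct] at h2
      exact h2
    have hterm := (Finset.sum_eq_zero_iff_of_nonneg
      (fun k _ => mul_nonneg (adj_entry_nonneg G i k) (hunn k))).mp h0 j (Finset.mem_univ _)
    simpa [SimpleGraph.adjMatrix_apply, hij] using hterm
  have hzero : ∀ j, u j = 0 := by
    have key : ∀ (a b : Fin n), G.Walk a b → u a = 0 → u b = 0 := by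
      intro a b p
      induction p with
      | nil => exact id
      | cons h' _ ih => intro ha; exact ih (hstep _ ha _ h')
    intro j
    exact key i0 j (hconn.preconnected i0 j).some hui0
  have : u = 0 := funext hzero
  rw [hu] at this
  exact sub_eq_zero.mp this

end LocalHoffmanHelpers

open scoped RealInnerProductSpace

theorem local_hoffman_polynomial {n : ℕ} (hn : 0 < n) (G : SimpleGraph (Fin n)) [DecidableRel G.Adj]
    (hconn : G.Connected)
    (ν : EuclideanSpace ℝ (Fin n)) (hν : ∀ i, 0 < ν i) (lam0 : ℝ)
    (hPerron : (G.adjMatrix ℝ).mulVec ν = lam0 • ν)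
    (C : Finset (Fin n)) (hC : C.Nonempty)
    (d : ℕ) (μ : Fin (d + 1) → ℝ) (hμa : StrictAnti μ)
    (hμr : Set.range μ = evloc (G.adjMatrix ℝ) ν C) :
    aevalVec (G.adjMatrix ℝ)
      (Polynomial.C (‖ν‖ ^ 2 / (piC μ 0 * ‖rho ν C‖ ^ 2)) *
        ∏ l ∈ Finset.univ.erase 0, (Polynomial.X - Polynomial.C (μ l)))
      (rho ν C) = ν := by
  classical
  set A := G.adjMatrix ℝ with hA
  set T := Matrix.toEuclideanLin A with hTdef
  have hsymm : T.IsSymmetric := by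
    rw [hTdef, ← Matrix.isHermitian_iff_isSymmetric]
    ext i j
    simp [hA, Matrix.conjTranspose_apply, SimpleGraph.adjMatrix_apply, SimpleGraph.adj_comm]
  set ρ := rho ν C with hρdef
  have hνmem : ν ∈ eigSp A lam0 := mem_eigSp.mpr hPerron
  have hρν : ⟪ρ, ν⟫ = ‖ρ‖ ^ 2 := inner_rho ν C
  have hρνpos : (0:ℝ) < ⟪ρ, ν⟫ := rho_inner_pos ν hν hC
  have hρ0 : ρ ≠ 0 := by
    intro h; rw [h] at hρνpos; simp at hρνpos
  have hν0 : ν ≠ 0 := by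
    intro h
    have h2 := hν ⟨0, hn⟩
    rw [h] at h2
    exact lt_irrefl _ h2
  -- lam0 is in the local spectrum
  have hlam0mem : lam0 ∈ evloc A ν C := by
    intro hproj
    simp only [eigProj] at hproj
    have h1 : (eigSp A lam0).orthogonalProjection ρ = 0 :=
      Submodule.coe_eq_zero.mp hproj
    have h2 : ρ ∈ (eigSp A lam0)ᗮ := Submodule.orthogonalProjectionOnto_eq_zero_iff.mp h1
    have h3 := (Submodule.mem_orthogonal _ _).mp h2 ν hνmem
    rw [real_inner_comm] at h3
    exact hρνpos.ne' h3
  -- every local eigenvalue is at most lam0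
  have hevle : ∀ x ∈ evloc A ν C, x ≤ lam0 := by
    intro x hx
    have hbot : eigSp A x ≠ ⊥ := by
      intro hb
      apply hx
      have hmem : ρ ∈ (eigSp A x)ᗮ := by
        rw [hb, Submodule.bot_orthogonal_eq_top]; exact Submodule.mem_top
      have : (eigSp A x).orthogonalProjection ρ = 0 := Submodule.orthogonalProjectionOnto_eq_zero_iff.mpr hmem
      rw [eigProj, this]; rfl
    obtain ⟨w, hwmem, hw0⟩ := Submodule.exists_mem_ne_zero_of_ne_bot hbot
    exact perron_max G hν hPerron (by simpa using (WithLp.ofLp_injective 2).ne hw0) (mem_eigSp.mp hwmem)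
  have hμ0 : μ 0 = lam0 := by
    obtain ⟨j, hj⟩ : lam0 ∈ Set.range μ := by rw [hμr]; exact hlam0mem
    have h1 : μ 0 ≤ lam0 := hevle (μ 0) (by rw [← hμr]; exact Set.mem_range_self 0)
    have h2 : lam0 ≤ μ 0 := hj ▸ hμa.antitone (Fin.zero_le j)
    exact le_antisymm h1 h2
  -- the eigenspace of lam0 is spanned by ν
  have hspan : eigSp A lam0 = (ℝ ∙ ν) := by
    apply le_antisymm
    · intro w hw
      obtain ⟨c, hc⟩ := perron_simple hn G hconn hν hPerron (mem_eigSp.mp hw)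
      rw [show w = c • ν from WithLp.ofLp_injective 2 hc]
      exact Submodule.smul_mem _ c (Submodule.mem_span_singleton_self ν)
    · rw [Submodule.span_singleton_le_iff_mem]
      exact hνmem
  -- ρ lies in the span of the local eigenspaces
  set S := Set.range μ with hSdef
  set K : Submodule ℝ (EuclideanSpace ℝ (Fin n)) := ⨆ l : Fin (d + 1), eigSp A (μ l) with hK
  set K' : Submodule ℝ (EuclideanSpace ℝ (Fin n)) := ⨆ x : ↥Sᶜ, eigSp A (x : ℝ) with hK'
  have hsupTop : K ⊔ K' = ⊤ := by
    rw [eq_top_iff]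
    have h1 : (⨆ x : ℝ, Module.End.eigenspace T x)ᗮ = ⊥ :=
      hsymm.orthogonalComplement_iSup_eigenspaces_eq_bot
    have h2 : (⨆ x : ℝ, eigSp A x) = ⊤ := Submodule.orthogonal_eq_bot_iff.mp h1
    rw [← h2]
    apply iSup_le
    intro x
    by_cases hx : x ∈ S
    · obtain ⟨l, rfl⟩ := hx
      exact le_trans (le_iSup (fun l => eigSp A (μ l)) l) le_sup_left
    · exact le_trans (le_iSup (fun y : ↥Sᶜ => eigSp A (y : ℝ)) ⟨x, hx⟩) le_sup_right
  have horthmem : ρ ∈ K'ᗮ := by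
    rw [hK', ← Submodule.iInf_orthogonal, Submodule.mem_iInf]
    intro x
    have hx : (x : ℝ) ∉ evloc A ν C := by
      rw [← hμr]; exact x.2
    have hproj : eigProj A (x : ℝ) ρ = 0 := not_not.mp hx
    simp only [eigProj] at hproj
    have h1 : (eigSp A (x : ℝ)).orthogonalProjection ρ = 0 :=
      Submodule.coe_eq_zero.mp hproj
    exact Submodule.orthogonalProjectionOnto_eq_zero_iff.mp h1
  have horthK : K ≤ K'ᗮ := by
    rw [hK', ← Submodule.iInf_orthogonal]
    apply iSup_le
    intro l
    apply le_iInf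
    intro x
    intro v hv
    rw [Submodule.mem_orthogonal]
    intro u hu
    have hne : (x : ℝ) ≠ μ l := by
      intro hEq
      exact x.2 (hEq ▸ Set.mem_range_self l)
    exact hsymm.orthogonalFamily_eigenspaces hne ⟨u, hu⟩ ⟨v, hv⟩
  have hρK : ρ ∈ K := by
    have hmemTop : ρ ∈ K ⊔ K' := by rw [hsupTop]; exact Submodule.mem_top
    obtain ⟨a, ha, b, hb, hab⟩ := Submodule.mem_sup.mp hmemTop
    have hbperp : b ∈ K'ᗮ := by
      have h1 : b = ρ - a := by rw [← hab]; abel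
      rw [h1]
      exact Submodule.sub_mem _ horthmem (horthK ha)
    have hb0 : b = 0 := by
      have := (Submodule.orthogonal_disjoint K').le_bot
        (Submodule.mem_inf.mpr ⟨hb, hbperp⟩ : b ∈ K' ⊓ K'ᗮ)
      simpa using this
    rw [← hab, hb0, add_zero]
    exact ha
  -- the polynomial q = ∏_l (X - μ_l) annihilates ρ
  set p : Polynomial ℝ := ∏ l ∈ Finset.univ.erase (0 : Fin (d+1)), (X - Polynomial.C (μ l))
    with hpdef
  set q : Polynomial ℝ := (X - Polynomial.C (μ 0)) * p with hqdef
  have hqz : aeval T q ρ = 0 := by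
    have hker : K ≤ LinearMap.ker (aeval T q) := by
      apply iSup_le
      intro l w hw
      have hTw : T w = μ l • w := Module.End.mem_eigenspace_iff.mp hw
      rw [LinearMap.mem_ker, aeval_eigen hTw]
      have hqeval : q.eval (μ l) = 0 := by
        rcases eq_or_ne l 0 with rfl | hl
        · simp [hqdef]
        · rw [hqdef, eval_mul, hpdef, eval_prod]
          have : ∏ h ∈ Finset.univ.erase (0 : Fin (d+1)), (X - Polynomial.C (μ h)).eval (μ l)
              = 0 := by
            apply Finset.prod_eq_zero (Finset.mem_erase.mpr ⟨hl, Finset.mem_univ l⟩)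
            simp
          rw [this, mul_zero]
      rw [hqeval, zero_smul]
    exact LinearMap.mem_ker.mp (hker hρK)
  set z := aeval T p ρ with hzdef
  have hzeig : z ∈ eigSp A (μ 0) := by
    rw [eigSp, Module.End.mem_eigenspace_iff]
    have h1 : aeval T (X - Polynomial.C (μ 0)) z = 0 := by
      rw [hzdef, ← Module.End.mul_apply, ← map_mul, ← hqdef, hqz]
    rw [map_sub, aeval_X, aeval_C, LinearMap.sub_apply, Module.algebraMap_end_apply,
      sub_eq_zero] at h1
    exact h1
  rw [hμ0, hspan] at hzeig
  obtain ⟨c, hc⟩ := Submodule.mem_span_singleton.mp hzeig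
  have hTν : T ν = lam0 • ν := Module.End.mem_eigenspace_iff.mp hνmem
  have hpeval : p.eval lam0 = piC μ 0 := by
    rw [hpdef, eval_prod, piC]
    apply Finset.prod_congr rfl
    intro l hl
    have hl0 : l ≠ 0 := Finset.ne_of_mem_erase hl
    have hlt : μ l < μ 0 := hμa (Fin.pos_of_ne_zero hl0)
    rw [eval_sub, eval_X, eval_C, ← hμ0, abs_of_pos (sub_pos.mpr hlt)]
  have hzν : ⟪z, ν⟫ = piC μ 0 * ‖ρ‖ ^ 2 := by
    rw [hzdef, isSymm_aeval hsymm p ρ ν, aeval_eigen hTν p, real_inner_smul_right, hρν, hpeval]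
  have hcν : ⟪z, ν⟫ = c * ‖ν‖ ^ 2 := by
    rw [← hc, real_inner_smul_left, real_inner_self_eq_norm_sq]
  have hpiCpos : (0:ℝ) < piC μ 0 := by
    rw [piC]
    apply Finset.prod_pos
    intro l hl
    have hl0 : l ≠ 0 := Finset.ne_of_mem_erase hl
    have hlt : μ l < μ 0 := hμa (Fin.pos_of_ne_zero hl0)
    exact abs_pos.mpr (sub_ne_zero.mpr hlt.ne')
  have hnρ : (0:ℝ) < ‖ρ‖ ^ 2 := pow_pos (norm_pos_iff.mpr hρ0) 2
  have hnν : (0:ℝ) < ‖ν‖ ^ 2 := pow_pos (norm_pos_iff.mpr hν0) 2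
  have hcval : c = piC μ 0 * ‖ρ‖ ^ 2 / ‖ν‖ ^ 2 := by
    rw [eq_div_iff hnν.ne', ← hcν, hzν]
  rw [aevalVec_eq, ← hTdef, map_mul, aeval_C]
  have happ : (algebraMap ℝ (Module.End ℝ (EuclideanSpace ℝ (Fin n)))
        (‖ν‖ ^ 2 / (piC μ 0 * ‖rho ν C‖ ^ 2)) * aeval T p) ρ
      = (‖ν‖ ^ 2 / (piC μ 0 * ‖ρ‖ ^ 2)) • z := by
    rw [Module.End.mul_apply, Module.algebraMap_end_apply, hzdef, hρdef]
  rw [happ, ← hc, smul_smul, hcval]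
  have hone : ‖ν‖ ^ 2 / (piC μ 0 * ‖ρ‖ ^ 2) * (piC μ 0 * ‖ρ‖ ^ 2 / ‖ν‖ ^ 2) = 1 := by
    field_simp
  rw [hone, one_smul]
end
end

section
/- Let C be a completely pseudo-regular code in a finite simple connected graph Γ, with subconstituents C_k. Then for every k and every eigenvalue λ_l, the local multiplicities satisfy m_{C_k}(λ_l) = (‖ρC‖²/‖ρC_k‖²)·p_k(λ_l)²·m_C(λ_l), where p_k is the k-th C-local predistance polynomial. -/
open Finset Polynomial BigOperators
open scoped Classical

noncomputable section

lemma eigProj_add {n : ℕ} (A : Matrix (Fin n) (Fin n) ℝ) (μ : ℝ)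
    (v w : EuclideanSpace ℝ (Fin n)) :
    eigProj A μ (v + w) = eigProj A μ v + eigProj A μ w := by simp [eigProj]

lemma eigProj_smul {n : ℕ} (A : Matrix (Fin n) (Fin n) ℝ) (μ : ℝ) (c : ℝ)
    (v : EuclideanSpace ℝ (Fin n)) :
    eigProj A μ (c • v) = c • eigProj A μ v := by simp [eigProj]

lemma eigProj_mulVec {n : ℕ} (A : Matrix (Fin n) (Fin n) ℝ) (hA : A.IsHermitian) (μ : ℝ)
    (v : EuclideanSpace ℝ (Fin n)) :
    eigProj A μ (WithLp.toLp 2 (A.mulVec v)) = μ • eigProj A μ v := by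
  classical
  set T := Matrix.toEuclideanLin A with hT
  have hsym : T.IsSymmetric := Matrix.isHermitian_iff_isSymmetric.mp hA
  set E : Submodule ℝ (EuclideanSpace ℝ (Fin n)) := eigSp A μ with hE
  set u : EuclideanSpace ℝ (Fin n) := (E.orthogonalProjection v : EuclideanSpace ℝ (Fin n))
  have hu : u ∈ E := (E.orthogonalProjection v).2
  have hw : v - u ∈ Eᗮ := Submodule.sub_starProjection_mem_orthogonal v
  have hTu : T u = μ • u := Module.End.mem_eigenspace_iff.mp hu
  have hTw : T (v - u) ∈ Eᗮ := by
    intro x hx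
    have : T x = μ • x := Module.End.mem_eigenspace_iff.mp hx
    rw [← hsym x (v - u), this, inner_smul_left]
    simp [hw x hx]
  have hAv : WithLp.toLp 2 (A.mulVec v) = μ • u + T (v - u) := by
    have h0 : v = u + (v - u) := by abel
    calc WithLp.toLp 2 (A.mulVec v) = T v := rfl
    _ = T (u + (v - u)) := by rw [← h0]
    _ = T u + T (v - u) := map_add T _ _
    _ = μ • u + T (v - u) := by rw [hTu]
  rw [show eigProj A μ (WithLp.toLp 2 (A.mulVec v)) = eigProj A μ (μ • u + T (v - u)) from by rw [hAv],
    eigProj_add, eigProj_smul]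
  have h1 : eigProj A μ (T (v - u)) = 0 := by
    have h := Submodule.orthogonalProjectionOnto_apply_of_mem_orthogonal hTw
    show ((E.orthogonalProjection (T (v - u)) : E) : EuclideanSpace ℝ (Fin n)) = 0
    rw [h]; rfl
  have h2 : eigProj A μ u = u := by
    show ((E.orthogonalProjection u : E) : EuclideanSpace ℝ (Fin n)) = u
    exact Submodule.starProjection_eq_self_iff.mpr hu
  rw [h1, h2, add_zero]
  rfl

lemma eigProj_aevalVec {n : ℕ} (A : Matrix (Fin n) (Fin n) ℝ) (hA : A.IsHermitian) (μ : ℝ)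
    (q : Polynomial ℝ) :
    ∀ v : EuclideanSpace ℝ (Fin n),
      eigProj A μ (aevalVec A q v) = q.eval μ • eigProj A μ v := by
  induction q using Polynomial.induction_on with
  | C a =>
      intro v
      have : aevalVec A (C a) v = a • v := by
        simp [aevalVec, Algebra.algebraMap_eq_smul_one, Matrix.smul_mulVec,
          Matrix.one_mulVec]
      rw [this, eigProj_smul, eval_C]
  | add q r hq hr =>
      intro v
      have : aevalVec A (q + r) v = aevalVec A q v + aevalVec A r v := by
        simp [aevalVec, Matrix.add_mulVec]
      rw [this, eigProj_add, hq, hr, eval_add, add_smul]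
  | monomial m a ih =>
      intro v
      have hsplit : aevalVec A (C a * X ^ (m + 1)) v
          = aevalVec A (C a * X ^ m) (WithLp.toLp 2 (A.mulVec v)) := by
        simp only [aevalVec, map_mul, map_pow, aeval_X, pow_succ, ← mul_assoc,
          ← Matrix.mulVec_mulVec, WithLp.ofLp_toLp]
      rw [hsplit, ih, eigProj_mulVec A hA, smul_smul]
      congr 1
      simp [pow_succ]
      ring

lemma mloc_eq {n : ℕ} (A : Matrix (Fin n) (Fin n) ℝ) (ν : EuclideanSpace ℝ (Fin n))
    (S : Finset (Fin n)) (μ : ℝ) :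
    mloc A ν S μ = (‖rho ν S‖ ^ 2)⁻¹ * ‖eigProj A μ (rho ν S)‖ ^ 2 := by
  rw [mloc, unitVec, eigProj_smul, norm_smul]
  simp [mul_pow, abs_of_nonneg (inv_nonneg.mpr (norm_nonneg _))]

theorem subconstituent_multiplicities {n : ℕ} (hn : 0 < n) (G : SimpleGraph (Fin n)) [DecidableRel G.Adj]
    (hconn : G.Connected)
    (ν : EuclideanSpace ℝ (Fin n)) (hν : ∀ i, 0 < ν i) (lam0 : ℝ)
    (hPerron : (G.adjMatrix ℝ).mulVec ν = lam0 • ν)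
    (C : Finset (Fin n)) (hC : C.Nonempty)
    (d : ℕ) (hd : d + 1 = (evloc (G.adjMatrix ℝ) ν C).ncard)
    (p : ℕ → Polynomial ℝ)
    (hdeg : ∀ k ≤ d, (p k).natDegree = k)
    (horth : ∀ k ≤ d, ∀ h ≤ d, k ≠ h →
      (inner ℝ (aevalVec (G.adjMatrix ℝ) (p k) (unitVec ν C))
             (aevalVec (G.adjMatrix ℝ) (p h) (unitVec ν C)) : ℝ) = 0)
    (hnorm : ∀ k ≤ d,
      (inner ℝ (aevalVec (G.adjMatrix ℝ) (p k) (unitVec ν C))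
             (aevalVec (G.adjMatrix ℝ) (p k) (unitVec ν C)) : ℝ) = (p k).eval lam0)
    (hcode : ∀ k ≤ eccS G C, rho ν (subcons G C k) = aevalVec (G.adjMatrix ℝ) (p k) (rho ν C)) :
    ∀ k ≤ eccS G C,
      ∀ μ' : ℝ, Module.End.HasEigenvalue (Matrix.toEuclideanLin (G.adjMatrix ℝ)) μ' →
        mloc (G.adjMatrix ℝ) ν (subcons G C k) μ'
          = ‖rho ν C‖ ^ 2 / ‖rho ν (subcons G C k)‖ ^ 2 *
              ((p k).eval μ') ^ 2 * mloc (G.adjMatrix ℝ) ν C μ' := by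
  intro k hk mu' _
  set A := G.adjMatrix ℝ with hA
  have hH : A.IsHermitian := by
    ext i j
    rw [hA]
    simp [Matrix.conjTranspose_apply, SimpleGraph.adjMatrix_apply, SimpleGraph.adj_comm]
  have hkey : eigProj A mu' (rho ν (subcons G C k))
      = (p k).eval mu' • eigProj A mu' (rho ν C) := by
    rw [hcode k hk]
    exact eigProj_aevalVec A hH mu' (p k) (rho ν C)
  have hC0 : ‖rho ν C‖ ≠ 0 := by
    obtain ⟨i, hi⟩ := hC
    simp only [ne_eq, norm_eq_zero]
    intro h
    have h2 : rho ν C i = 0 := by rw [h]; rfl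
    rw [rho] at h2
    simp [hi] at h2
    exact (hν i).ne' h2
  rw [mloc_eq, mloc_eq, hkey, norm_smul]
  rcases eq_or_ne (‖rho ν (subcons G C k)‖) 0 with h0 | h0
  · simp [h0]
  · rw [mul_pow, Real.norm_eq_abs, sq_abs]
    field_simp
end
end
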